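/- Under the higher order tuner for time-varying regression with μ = 2γ/β, if in addition φ and φ' are bounded, then e_y(t) → 0, θ(t) - ϑ(t) → 0, ϑ'(t) → 0, and θ'(t) → 0 as t → ∞. -/

import Mathlib

open Filter

local notation "⟪" x ", " y "⟫" => @inner ℝ _ _ x y

open MeasureTheory intervalIntegral Set in
lemma barbalat_aux {h h' : ℝ → ℝ} (hd : ∀ t, HasDerivAt h (h' t) t)
    {L : ℝ} (hL : 0 < L) (hb : ∀ t ≥ (0:ℝ), |h' t| ≤ L)
    (hnn : ∀ t, 0 ≤ h t) {C : ℝ} (hC : ∀ t ≥ (0:ℝ), (∫ s in (0:ℝ)..t, h s) ≤ C) :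
    Tendsto h atTop (nhds 0) := by
  have hcont : Continuous h := continuous_iff_continuousAt.2 fun t => (hd t).continuousAt
  set F : ℝ → ℝ := fun t => ∫ s in (0:ℝ)..t, h s with hF
  have hFint : ∀ u v : ℝ, IntervalIntegrable h volume u v := fun u v =>
    hcont.intervalIntegrable u v
  have hFmono : Monotone F := by
    intro u v huv
    have : F u + ∫ s in u..v, h s = F v := integral_add_adjacent_intervals (hFint 0 u) (hFint u v)
    have hnn' : 0 ≤ ∫ s in u..v, h s :=
      intervalIntegral.integral_nonneg huv fun x _ => hnn x
    linarith
  have hFbdd : BddAbove (range F) := by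
    refine ⟨max C 0, ?_⟩
    rintro _ ⟨t, rfl⟩
    rcases le_or_gt 0 t with ht | ht
    · exact le_max_of_le_left (hC t ht)
    · have : F t ≤ F 0 := hFmono ht.le
      simp only [hF, intervalIntegral.integral_same] at this
      exact le_max_of_le_right this
  set S := ⨆ t, F t with hS
  have hFto : Tendsto F atTop (nhds S) := tendsto_atTop_ciSup hFmono hFbdd
  have hFleS : ∀ t, F t ≤ S := fun t => le_ciSup hFbdd t
  rw [Metric.tendsto_atTop]
  intro ε hε
  set c := ε / (2 * L) with hc
  have hc0 : 0 < c := by positivity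
  have hev : ∀ᶠ t in atTop, S - c * ε / 4 < F t :=
    (tendsto_order.1 hFto).1 _ (by nlinarith)
  obtain ⟨N, hN⟩ := hev.exists_forall_of_atTop
  refine ⟨max N 0, fun t ht => ?_⟩
  have htN : N ≤ t := le_trans (le_max_left _ _) ht
  have ht0 : (0:ℝ) ≤ t := le_trans (le_max_right _ _) ht
  rw [Real.dist_eq, sub_zero, abs_of_nonneg (hnn t)]
  by_contra hcon
  push_neg at hcon
  have hlow : ∀ s ∈ Icc t (t + c), ε / 2 ≤ h s := by
    intro s hs
    have hLip := norm_image_sub_le_of_norm_deriv_le_segment'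
      (f := h) (f' := h') (a := t) (b := t + c) (C := L)
      (fun x _ => (hd x).hasDerivWithinAt)
      (fun x hx => by
        rw [Real.norm_eq_abs]
        exact hb x (le_trans ht0 hx.1)) s hs
    rw [Real.norm_eq_abs] at hLip
    have h1 : |h s - h t| ≤ L * c := le_trans hLip (by
      have := hs.2
      nlinarith)
    have h2 : L * c = ε / 2 := by
      field_simp [hc]
      rw [hc]; field_simp
    have := abs_le.1 h1
    nlinarith [this.1]
  have hint : c * (ε / 2) ≤ ∫ s in t..(t + c), h s := by
    have := intervalIntegral.integral_mono_on (by linarith : t ≤ t + c)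
      (_root_.intervalIntegrable_const (c := ε / 2)) (hFint t (t + c)) hlow
    rwa [intervalIntegral.integral_const, smul_eq_mul, add_sub_cancel_left] at this
  have hsplit : F t + ∫ s in t..(t + c), h s = F (t + c) :=
    integral_add_adjacent_intervals (hFint 0 t) (hFint t (t + c))
  have h3 : F (t + c) ≤ S := hFleS _
  have h4 : S - c * ε / 4 < F t := hN t htN
  nlinarith

set_option maxHeartbeats 2000000 in
/-- Higher order tuner for time-varying regression with `μ = 2γ/β`: if `φ` and `φ'` are
bounded, then `e_y → 0`, `θ - ϑ → 0`, `ϑ' → 0` and `θ' → 0` as `t → ∞`. -/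
theorem stmt_12 {d : ℕ} (β γ : ℝ) (hβ : 0 < β) (hγ : 0 < γ)
    (φ φ' : ℝ → EuclideanSpace ℝ (Fin d))
    (hφ : ∀ t : ℝ, HasDerivAt φ (φ' t) t) (hφ'c : Continuous φ')
    (hφ_bdd : ∃ M : ℝ, ∀ t : ℝ, ‖φ t‖ ≤ M)
    (hφ'_bdd : ∃ M : ℝ, ∀ t : ℝ, ‖φ' t‖ ≤ M)
    (θstar : EuclideanSpace ℝ (Fin d))
    (θ ϑ : ℝ → EuclideanSpace ℝ (Fin d))
    (Nt : ℝ → ℝ) (hNt : Nt = fun t => 1 + (2 * γ / β) * ‖φ t‖ ^ 2)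
    (hϑ : ∀ t : ℝ, HasDerivAt ϑ ((-γ * ⟪θ t - θstar, φ t⟫) • φ t) t)
    (hθ : ∀ t : ℝ, HasDerivAt θ ((-(β * Nt t)) • (θ t - ϑ t)) t) :
    Tendsto (fun t => ⟪θ t - θstar, φ t⟫) atTop (nhds 0) ∧
    Tendsto (fun t => θ t - ϑ t) atTop (nhds (0 : EuclideanSpace ℝ (Fin d))) ∧
    Tendsto (fun t => (-γ * ⟪θ t - θstar, φ t⟫) • φ t) atTop
      (nhds (0 : EuclideanSpace ℝ (Fin d))) ∧
    Tendsto (fun t => (-(β * Nt t)) • (θ t - ϑ t)) atTop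
      (nhds (0 : EuclideanSpace ℝ (Fin d))) := by
  obtain ⟨M, hM⟩ := hφ_bdd
  obtain ⟨M', hM'⟩ := hφ'_bdd
  have hM0 : 0 ≤ M := le_trans (norm_nonneg _) (hM 0)
  have hM'0 : 0 ≤ M' := le_trans (norm_nonneg _) (hM' 0)
  -- abbreviations
  set ey : ℝ → ℝ := fun t => ⟪θ t - θstar, φ t⟫ with hey
  set a : ℝ → EuclideanSpace ℝ (Fin d) := fun t => ϑ t - θstar with ha
  set b : ℝ → EuclideanSpace ℝ (Fin d) := fun t => θ t - ϑ t with hb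
  set b' : ℝ → EuclideanSpace ℝ (Fin d) :=
    fun t => (-(β * Nt t)) • b t - (-γ * ey t) • φ t with hb'
  have hda : ∀ t, HasDerivAt a ((-γ * ey t) • φ t) t := fun t => (hϑ t).sub_const θstar
  have hdb : ∀ t, HasDerivAt b (b' t) t := fun t => (hθ t).sub (hϑ t)
  -- derivative of ey
  set ey' : ℝ → ℝ :=
    fun t => ⟪θ t - θstar, φ' t⟫ + ⟪(-(β * Nt t)) • b t, φ t⟫ with hey'
  have hdey : ∀ t, HasDerivAt ey (ey' t) t := fun t =>
    HasDerivAt.inner ℝ ((hθ t).sub_const θstar) (hφ t)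
  -- Lyapunov function
  set V : ℝ → ℝ := fun t => ⟪a t, a t⟫ + ⟪b t, b t⟫ with hV
  set V' : ℝ → ℝ := fun t =>
    (⟪a t, (-γ * ey t) • φ t⟫ + ⟪(-γ * ey t) • φ t, a t⟫) +
    (⟪b t, b' t⟫ + ⟪b' t, b t⟫) with hV'
  have hdV : ∀ t, HasDerivAt V (V' t) t := fun t =>
    (HasDerivAt.inner ℝ (hda t) (hda t)).add (HasDerivAt.inner ℝ (hdb t) (hdb t))
  set D : ℝ → ℝ := fun t => γ * ey t ^ 2 + 2 * β * ⟪b t, b t⟫ with hD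
  have hDnn : ∀ t, 0 ≤ D t := fun t =>
    add_nonneg (mul_nonneg hγ.le (sq_nonneg _))
      (mul_nonneg (by linarith) real_inner_self_nonneg)
  -- key inequality
  have hkey : ∀ t, V' t + D t ≤ 0 := by
    intro t
    have hsplit : ⟪a t, φ t⟫ = ey t - ⟪b t, φ t⟫ := by
      rw [hey, ha, hb]
      simp only
      rw [← inner_sub_left]
      congr 1
      abel
    have hCS := real_inner_mul_inner_self_le (b t) (φ t)
    have hbb : (0:ℝ) ≤ ⟪b t, b t⟫ := real_inner_self_nonneg
    have hpp : ⟪φ t, φ t⟫ = ‖φ t‖ ^ 2 := real_inner_self_eq_norm_sq (φ t)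
    have hNval : Nt t = 1 + 2 * γ / β * ‖φ t‖ ^ 2 := by rw [hNt]
    have hfield : β * (2 * γ / β) = 2 * γ := by field_simp
    have h1 : ⟪a t, (-γ * ey t) • φ t⟫ = -γ * ey t * (ey t - ⟪b t, φ t⟫) := by
      rw [real_inner_smul_right, hsplit]
    have h2 : ⟪(-γ * ey t) • φ t, a t⟫ = -γ * ey t * (ey t - ⟪b t, φ t⟫) := by
      rw [real_inner_smul_left, real_inner_comm, hsplit]
    have h3 : ⟪b t, b' t⟫ = -(β * Nt t) * ⟪b t, b t⟫ - -γ * ey t * ⟪b t, φ t⟫ := by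
      simp only [hb']
      rw [inner_sub_right, real_inner_smul_right, real_inner_smul_right]
    have h4 : ⟪b' t, b t⟫ = -(β * Nt t) * ⟪b t, b t⟫ - -γ * ey t * ⟪b t, φ t⟫ := by
      rw [real_inner_comm]
      exact h3
    have hgoal : V' t + D t =
        (-γ * ey t * (ey t - ⟪b t, φ t⟫) + -γ * ey t * (ey t - ⟪b t, φ t⟫)) +
        ((-(β * Nt t) * ⟪b t, b t⟫ - -γ * ey t * ⟪b t, φ t⟫) +
         (-(β * Nt t) * ⟪b t, b t⟫ - -γ * ey t * ⟪b t, φ t⟫)) +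
        (γ * ey t ^ 2 + 2 * β * ⟪b t, b t⟫) := by
      simp only [hV', hD, h1, h2, h3, h4]
    have hβN : β * Nt t = β + 2 * γ * ⟪φ t, φ t⟫ := by
      rw [hNval, hpp]
      field_simp
    rw [hgoal, hβN]
    nlinarith [mul_nonneg hγ.le (sq_nonneg (ey t - 2 * ⟪b t, φ t⟫)),
      mul_nonneg hγ.le (sub_nonneg.2 hCS)]
  have hVnn : ∀ t, 0 ≤ V t := fun t =>
    add_nonneg real_inner_self_nonneg real_inner_self_nonneg
  have hV'le : ∀ t, V' t ≤ 0 := fun t => by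
    have h1 := hkey t; have h2 := hDnn t; linarith
  have hVanti : Antitone V := by
    apply antitone_of_deriv_nonpos (fun t => (hdV t).differentiableAt)
    intro t; rw [(hdV t).deriv]; exact hV'le t
  set K := Real.sqrt (V 0) with hK
  have hK0 : 0 ≤ K := Real.sqrt_nonneg _
  have hbK : ∀ t ≥ (0:ℝ), ‖b t‖ ≤ K := by
    intro t ht
    apply Real.le_sqrt_of_sq_le
    have h1 : V t ≤ V 0 := hVanti ht
    have h2 : (0:ℝ) ≤ ⟪a t, a t⟫ := real_inner_self_nonneg
    have h3 : ‖b t‖ ^ 2 ≤ V t := by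
      rw [← real_inner_self_eq_norm_sq]
      simp only [hV]
      linarith
    linarith
  have haK : ∀ t ≥ (0:ℝ), ‖a t‖ ≤ K := by
    intro t ht
    apply Real.le_sqrt_of_sq_le
    have h1 : V t ≤ V 0 := hVanti ht
    have h2 : (0:ℝ) ≤ ⟪b t, b t⟫ := real_inner_self_nonneg
    have h3 : ‖a t‖ ^ 2 ≤ V t := by
      rw [← real_inner_self_eq_norm_sq]
      simp only [hV]
      linarith
    linarith
  have hθK : ∀ t ≥ (0:ℝ), ‖θ t - θstar‖ ≤ 2 * K := by
    intro t ht
    have : θ t - θstar = a t + b t := by simp only [ha, hb]; abel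
    rw [this]
    calc ‖a t + b t‖ ≤ ‖a t‖ + ‖b t‖ := norm_add_le _ _
      _ ≤ 2 * K := by linarith [haK t ht, hbK t ht]
  have heyB : ∀ t ≥ (0:ℝ), |ey t| ≤ 2 * K * M := by
    intro t ht
    calc |ey t| ≤ ‖θ t - θstar‖ * ‖φ t‖ := abs_real_inner_le_norm _ _
      _ ≤ 2 * K * M :=
        mul_le_mul (hθK t ht) (hM t) (norm_nonneg _) (by linarith)
  set Nm : ℝ := 1 + 2 * γ / β * M ^ 2 with hNm
  have hNtB : ∀ t, Nt t ≤ Nm := by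
    intro t
    have hNval : Nt t = 1 + 2 * γ / β * ‖φ t‖ ^ 2 := by rw [hNt]
    have h1 : ‖φ t‖ ^ 2 ≤ M ^ 2 := pow_le_pow_left₀ (norm_nonneg _) (hM t) 2
    have h2 : 0 ≤ 2 * γ / β := by positivity
    rw [hNval, hNm]
    have h3 := mul_le_mul_of_nonneg_left h1 h2
    linarith
  have hNt1 : ∀ t, 1 ≤ Nt t := by
    intro t
    have hNval : Nt t = 1 + 2 * γ / β * ‖φ t‖ ^ 2 := by rw [hNt]
    have h2 : 0 ≤ 2 * γ / β := by positivity
    rw [hNval]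
    have h3 := mul_nonneg h2 (sq_nonneg ‖φ t‖)
    linarith
  have hNm0 : 0 ≤ Nm := le_trans (by linarith [hNt1 0]) (hNtB 0)
  have hsmul1 : ∀ t, ‖(-(β * Nt t)) • b t‖ = β * Nt t * ‖b t‖ := by
    intro t
    rw [norm_smul, Real.norm_eq_abs, abs_neg,
      abs_of_pos (by nlinarith [hNt1 t] : (0:ℝ) < β * Nt t)]
  have hsmul2 : ∀ t, ‖(-γ * ey t) • φ t‖ = γ * |ey t| * ‖φ t‖ := by
    intro t
    rw [norm_smul, Real.norm_eq_abs, abs_mul, abs_neg, abs_of_pos hγ, mul_assoc]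
  set B' : ℝ := β * Nm * K + γ * (2 * K * M) * M with hB'
  have hb'B : ∀ t ≥ (0:ℝ), ‖b' t‖ ≤ B' := by
    intro t ht
    have h1 : ‖b' t‖ ≤ ‖(-(β * Nt t)) • b t‖ + ‖(-γ * ey t) • φ t‖ := by
      simp only [hb']
      exact norm_sub_le _ _
    rw [hsmul1 t, hsmul2 t] at h1
    have h2 : β * Nt t * ‖b t‖ ≤ β * Nm * K :=
      mul_le_mul (mul_le_mul_of_nonneg_left (hNtB t) hβ.le) (hbK t ht)
        (norm_nonneg _) (mul_nonneg hβ.le hNm0)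
    have h3 : γ * |ey t| * ‖φ t‖ ≤ γ * (2 * K * M) * M :=
      mul_le_mul (mul_le_mul_of_nonneg_left (heyB t ht) hγ.le) (hM t)
        (norm_nonneg _) (mul_nonneg hγ.le (by positivity))
    rw [hB']; linarith
  set E' : ℝ := 2 * K * M' + β * Nm * K * M with hE'
  have hey'B : ∀ t ≥ (0:ℝ), |ey' t| ≤ E' := by
    intro t ht
    have h1 : |⟪θ t - θstar, φ' t⟫| ≤ 2 * K * M' :=
      (abs_real_inner_le_norm _ _).trans
        (mul_le_mul (hθK t ht) (hM' t) (norm_nonneg _) (by linarith))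
    have h2 : |⟪(-(β * Nt t)) • b t, φ t⟫| ≤ β * Nm * K * M := by
      refine (abs_real_inner_le_norm _ _).trans ?_
      rw [hsmul1 t]
      exact mul_le_mul (mul_le_mul (mul_le_mul_of_nonneg_left (hNtB t) hβ.le)
        (hbK t ht) (norm_nonneg _) (mul_nonneg hβ.le hNm0)) (hM t) (norm_nonneg _)
        (mul_nonneg (mul_nonneg hβ.le hNm0) hK0)
    calc |ey' t| ≤ |⟪θ t - θstar, φ' t⟫| + |⟪(-(β * Nt t)) • b t, φ t⟫| := by
          simp only [hey']; exact abs_add_le _ _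
      _ ≤ E' := by rw [hE']; linarith
  -- derivative of D
  set D' : ℝ → ℝ := fun t =>
    γ * ((2 : ℕ) * ey t ^ 1 * ey' t) + 2 * β * (⟪b t, b' t⟫ + ⟪b' t, b t⟫) with hD'
  have hdD : ∀ t, HasDerivAt D (D' t) t := by
    intro t
    exact (((hdey t).pow 2).const_mul γ).add
      ((HasDerivAt.inner ℝ (hdb t) (hdb t)).const_mul (2 * β))
  set LD : ℝ := γ * (2 * (2 * K * M) * E') + 2 * β * (2 * (K * B')) + 1 with hLD
  have hB'0 : 0 ≤ B' := le_trans (norm_nonneg _) (hb'B 0 le_rfl)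
  have hE'0 : 0 ≤ E' := le_trans (abs_nonneg _) (hey'B 0 le_rfl)
  have hLD0 : 0 < LD := by
    rw [hLD]
    have h1 : 0 ≤ γ * (2 * (2 * K * M) * E') := by
      apply mul_nonneg hγ.le
      apply mul_nonneg (by positivity) hE'0
    have h2 : 0 ≤ 2 * β * (2 * (K * B')) := by
      apply mul_nonneg (by linarith)
      apply mul_nonneg (by norm_num) (mul_nonneg hK0 hB'0)
    linarith
  have hLDbd : ∀ t ≥ (0:ℝ), |D' t| ≤ LD := by
    intro t ht
    have i1 : |⟪b t, b' t⟫| ≤ K * B' :=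
      (abs_real_inner_le_norm _ _).trans
        (mul_le_mul (hbK t ht) (hb'B t ht) (norm_nonneg _) hK0)
    have i2 : |⟪b' t, b t⟫| ≤ K * B' := by
      rw [real_inner_comm]; exact i1
    have e1 := heyB t ht
    have e2 := hey'B t ht
    have step1 : |D' t| ≤ γ * (2 * |ey t| * |ey' t|) +
        2 * β * (|⟪b t, b' t⟫| + |⟪b' t, b t⟫|) := by
      simp only [hD', Nat.cast_ofNat, pow_one]
      refine (abs_add_le _ _).trans ?_
      rw [abs_mul, abs_mul, abs_mul, abs_mul, abs_of_nonneg hγ.le,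
        abs_of_nonneg (by linarith : (0:ℝ) ≤ 2 * β), abs_two]
      have := abs_add_le ⟪b t, b' t⟫ ⟪b' t, b t⟫
      have h2b : (0:ℝ) ≤ 2 * β := by linarith
      nlinarith [abs_nonneg (ey t), abs_nonneg (ey' t)]
    have step2 : γ * (2 * |ey t| * |ey' t|) ≤ γ * (2 * (2 * K * M) * E') := by
      apply mul_le_mul_of_nonneg_left _ hγ.le
      have := abs_nonneg (ey t); have := abs_nonneg (ey' t)
      nlinarith
    have step3 : 2 * β * (|⟪b t, b' t⟫| + |⟪b' t, b t⟫|) ≤ 2 * β * (2 * (K * B')) := by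
      apply mul_le_mul_of_nonneg_left _ (by linarith : (0:ℝ) ≤ 2 * β)
      linarith
    rw [hLD]; linarith
  -- integral bound
  have hcb : Continuous b := continuous_iff_continuousAt.2 fun t => (hdb t).continuousAt
  have hcey : Continuous ey := continuous_iff_continuousAt.2 fun t => (hdey t).continuousAt
  have hDc : Continuous D := by
    simp only [hD]
    exact (continuous_const.mul (hcey.pow 2)).add (continuous_const.mul (hcb.inner hcb))
  set W : ℝ → ℝ := fun t => V t + ∫ s in (0:ℝ)..t, D s with hW
  have hdW : ∀ t, HasDerivAt W (V' t + D t) t := by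
    intro t
    exact (hdV t).add (intervalIntegral.integral_hasDerivAt_right
      (hDc.intervalIntegrable _ _)
      (hDc.stronglyMeasurableAtFilter _ _) hDc.continuousAt)
  have hWanti : Antitone W := by
    apply antitone_of_deriv_nonpos (fun t => (hdW t).differentiableAt)
    intro t; rw [(hdW t).deriv]; exact hkey t
  have hCD : ∀ t ≥ (0:ℝ), (∫ s in (0:ℝ)..t, D s) ≤ V 0 := by
    intro t ht
    have h1 : W t ≤ W 0 := hWanti ht
    simp only [hW, intervalIntegral.integral_same, add_zero] at h1
    have := hVnn t
    linarith
  have hDto : Tendsto D atTop (nhds 0) := barbalat_aux hdD hLD0 hLDbd hDnn hCD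
  -- e_y → 0
  have heysq : Tendsto (fun t => ey t ^ 2) atTop (nhds 0) := by
    have hle : ∀ t, ey t ^ 2 ≤ γ⁻¹ * D t := by
      intro t
      have h1 : γ * ey t ^ 2 ≤ D t := by
        simp only [hD]
        nlinarith [(real_inner_self_nonneg : (0:ℝ) ≤ ⟪b t, b t⟫)]
      have h2 := mul_le_mul_of_nonneg_left h1 (inv_nonneg.2 hγ.le)
      rwa [← mul_assoc, inv_mul_cancel₀ hγ.ne', one_mul] at h2
    have hto : Tendsto (fun t => γ⁻¹ * D t) atTop (nhds 0) := by
      have := hDto.const_mul γ⁻¹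
      rwa [mul_zero] at this
    exact squeeze_zero (fun t => sq_nonneg _) hle hto
  have habs : Tendsto (fun t => |ey t|) atTop (nhds 0) := by
    have h1 : Tendsto (fun t => Real.sqrt (ey t ^ 2)) atTop (nhds (Real.sqrt 0)) :=
      (Real.continuous_sqrt.tendsto 0).comp heysq
    rw [Real.sqrt_zero] at h1
    simpa only [Real.sqrt_sq_eq_abs] using h1
  have t1 : Tendsto ey atTop (nhds 0) :=
    squeeze_zero_norm (fun t => le_of_eq (Real.norm_eq_abs _)) habs
  -- b → 0
  have hbbto : Tendsto (fun t => ⟪b t, b t⟫) atTop (nhds 0) := by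
    have hle : ∀ t, ⟪b t, b t⟫ ≤ (2 * β)⁻¹ * D t := by
      intro t
      have h1 : 2 * β * ⟪b t, b t⟫ ≤ D t := by
        simp only [hD]
        nlinarith [sq_nonneg (ey t)]
      have h2 := mul_le_mul_of_nonneg_left h1
        (inv_nonneg.2 (by linarith : (0:ℝ) ≤ 2 * β))
      rwa [← mul_assoc, inv_mul_cancel₀ (by positivity : (2:ℝ) * β ≠ 0), one_mul] at h2
    have hto : Tendsto (fun t => (2 * β)⁻¹ * D t) atTop (nhds 0) := by
      have := hDto.const_mul (2 * β)⁻¹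
      rwa [mul_zero] at this
    exact squeeze_zero (fun t => real_inner_self_nonneg) hle hto
  have hnormb : Tendsto (fun t => ‖b t‖) atTop (nhds 0) := by
    have h1 : Tendsto (fun t => Real.sqrt ⟪b t, b t⟫) atTop (nhds (Real.sqrt 0)) :=
      (Real.continuous_sqrt.tendsto 0).comp hbbto
    rw [Real.sqrt_zero] at h1
    have h2 : (fun t => Real.sqrt ⟪b t, b t⟫) = fun t => ‖b t‖ := by
      funext t
      rw [real_inner_self_eq_norm_sq, Real.sqrt_sq (norm_nonneg _)]
    rwa [h2] at h1
  have t2 : Tendsto b atTop (nhds (0 : EuclideanSpace ℝ (Fin d))) :=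
    tendsto_zero_iff_norm_tendsto_zero.2 hnormb
  have t3 : Tendsto (fun t => (-γ * ey t) • φ t) atTop
      (nhds (0 : EuclideanSpace ℝ (Fin d))) := by
    apply squeeze_zero_norm (a := fun t => γ * M * |ey t|)
    · intro t
      rw [hsmul2 t]
      have h1 : γ * |ey t| * ‖φ t‖ = γ * ‖φ t‖ * |ey t| := by ring
      rw [h1]
      exact mul_le_mul_of_nonneg_right
        (mul_le_mul_of_nonneg_left (hM t) hγ.le) (abs_nonneg _)
    · have := habs.const_mul (γ * M)
      rwa [mul_zero] at this
  have t4 : Tendsto (fun t => (-(β * Nt t)) • b t) atTop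
      (nhds (0 : EuclideanSpace ℝ (Fin d))) := by
    apply squeeze_zero_norm (a := fun t => β * Nm * ‖b t‖)
    · intro t
      rw [hsmul1 t]
      exact mul_le_mul_of_nonneg_right
        (mul_le_mul_of_nonneg_left (hNtB t) hβ.le) (norm_nonneg _)
    · have := hnormb.const_mul (β * Nm)
      rwa [mul_zero] at this
  exact ⟨t1, t2, t3, t4⟩
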